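/- For every odd integer n ≥ 1, the bipartite adjacency matrix A of the n-dimensional hypercube Q_n over the field ZMod 2 — that is, the matrix with rows indexed by the even-weight vertices of Q_n, columns indexed by the odd-weight vertices of Q_n, and entry 1 when the two vertices are adjacent and 0 otherwise — is nonsingular and is its own inverse: identifying the even-weight and odd-weight index sets via any fixed bijection making A a square matrix in the natural symmetric indexing, A · Aᵀ equals the identity matrix (equivalently, A is invertible with A⁻¹ = Aᵀ = A under the symmetric indexing). -/

import Mathlib

/-- The `n`-dimensional hypercube graph: vertices are elements of `{0,1}^n`,
adjacent iff they differ in exactly one coordinate. -/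
def hypercube (n : ℕ) : SimpleGraph (Fin n → ZMod 2) where
  Adj x y := ∃! i, x i ≠ y i
  symm := by constructor; rintro x y ⟨i, hi, hu⟩; exact ⟨i, Ne.symm hi, fun j hj => hu j (Ne.symm hj)⟩
  loopless := by constructor; rintro x ⟨i, hi, -⟩; exact hi rfl

/-- The even-weight vertices of the hypercube `Q_n`. -/
def evenV (n : ℕ) : Type := {x : Fin n → ZMod 2 // ∑ i, x i = 0}

/-- The odd-weight vertices of the hypercube `Q_n`. -/
def oddV (n : ℕ) : Type := {x : Fin n → ZMod 2 // ∑ i, x i ≠ 0}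

instance (n : ℕ) : Fintype (evenV n) := by unfold evenV; infer_instance
instance (n : ℕ) : Fintype (oddV n) := by unfold oddV; infer_instance
instance (n : ℕ) : DecidableEq (evenV n) := by unfold evenV; infer_instance
instance (n : ℕ) : DecidableEq (oddV n) := by unfold oddV; infer_instance

open scoped Classical in
/-- The bipartite adjacency matrix of `Q_n` over `ZMod 2`: rows indexed by even-weight
vertices, columns by odd-weight vertices, entry `1` at adjacent pairs, `0` otherwise. -/
noncomputable def bipAdjMatrix (n : ℕ) : Matrix (evenV n) (oddV n) (ZMod 2) :=
  fun x y => if (hypercube n).Adj x.val y.val then 1 else 0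

-- auxiliary lemmas

lemma zmod2_ne_iff : ∀ a b : ZMod 2, a ≠ b ↔ b = a + 1 := by decide
lemma zmod2_ne_add_one : ∀ a : ZMod 2, a ≠ a + 1 := by decide
lemma zmod2_add_self : ∀ a : ZMod 2, a + a = 0 := by decide
lemma zmod2_rearr : ∀ a b c d : ZMod 2, a + b = c + d → a + d = c + b := by decide

lemma single_index_inj {n : ℕ} {i j : Fin n}
    (h : (Pi.single i 1 : Fin n → ZMod 2) = Pi.single j 1) : i = j := by
  by_contra hij
  have := congrFun h i
  rw [Pi.single_eq_same, Pi.single_eq_of_ne hij] at this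
  exact one_ne_zero this

lemma adj_iff {n : ℕ} (x y : Fin n → ZMod 2) :
    (hypercube n).Adj x y ↔ ∃ i, y = x + Pi.single i 1 := by
  constructor
  · rintro ⟨i, hi, hu⟩
    refine ⟨i, funext fun j => ?_⟩
    by_cases h : j = i
    · subst h
      simpa [Pi.single_eq_same] using (zmod2_ne_iff _ _).1 hi
    · have hx : x j = y j := by
        by_contra hne
        exact h (hu j hne)
      simp [Pi.add_apply, Pi.single_eq_of_ne h, ← hx]
  · rintro ⟨i, rfl⟩
    refine ⟨i, ?_, fun j hj => ?_⟩
    · simp only [Pi.add_apply, Pi.single_eq_same]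
      exact zmod2_ne_add_one _
    · by_contra h
      apply hj
      simp [Pi.add_apply, Pi.single_eq_of_ne h]

open scoped Classical

lemma ind_eq {n : ℕ} (x y : Fin n → ZMod 2) :
    (if (hypercube n).Adj x y then (1 : ZMod 2) else 0)
      = ∑ i, if y = x + Pi.single i 1 then (1 : ZMod 2) else 0 := by
  by_cases h : (hypercube n).Adj x y
  · rw [if_pos h]
    obtain ⟨i, rfl⟩ := (adj_iff x y).1 h
    have hcond : ∀ j : Fin n,
        (x + Pi.single i 1 = x + Pi.single j 1) ↔ j = i := by
      intro j
      constructor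
      · intro hh
        exact (single_index_inj (add_left_cancel hh)).symm
      · rintro rfl; rfl
    simp [hcond]
  · rw [if_neg h]
    symm
    apply Finset.sum_eq_zero
    intro i _
    rw [if_neg]
    intro hy
    exact h ((adj_iff x y).2 ⟨i, hy⟩)

lemma adj_sum {n : ℕ} {x y : Fin n → ZMod 2} (h : (hypercube n).Adj x y) :
    ∑ i, y i = (∑ i, x i) + 1 := by
  obtain ⟨i, rfl⟩ := (adj_iff x y).1 h
  have : ∑ j, (Pi.single i 1 : Fin n → ZMod 2) j = 1 := by
    rw [Finset.sum_eq_single i]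
    · exact Pi.single_eq_same i 1
    · intro j _ hj; exact Pi.single_eq_of_ne hj 1
    · simp
  simp [Pi.add_apply, Finset.sum_add_distrib, this]

lemma key_sum {n : ℕ} (x x' : Fin n → ZMod 2) :
    ∑ y : Fin n → ZMod 2,
        (if (hypercube n).Adj x y then (1 : ZMod 2) else 0) *
        (if (hypercube n).Adj x' y then (1 : ZMod 2) else 0)
      = if x = x' then (n : ZMod 2) else 0 := by
  have inner : ∀ a b : Fin n → ZMod 2,
      ∑ y : Fin n → ZMod 2,
        (if y = a then (1 : ZMod 2) else 0) * (if y = b then (1 : ZMod 2) else 0)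
      = if a = b then (1 : ZMod 2) else 0 := by
    intro a b
    rw [Finset.sum_eq_single a]
    · simp
    · intro y _ hy; rw [if_neg hy, zero_mul]
    · simp
  calc ∑ y : Fin n → ZMod 2,
        (if (hypercube n).Adj x y then (1 : ZMod 2) else 0) *
        (if (hypercube n).Adj x' y then (1 : ZMod 2) else 0)
      = ∑ y : Fin n → ZMod 2, ∑ i, ∑ j,
          (if y = x + Pi.single i 1 then (1 : ZMod 2) else 0) *
          (if y = x' + Pi.single j 1 then (1 : ZMod 2) else 0) := by
        apply Finset.sum_congr rfl
        intro y _
        rw [ind_eq x y, ind_eq x' y, Finset.sum_mul]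
        apply Finset.sum_congr rfl
        intro i _
        rw [Finset.mul_sum]
    _ = ∑ i, ∑ j, ∑ y : Fin n → ZMod 2,
          (if y = x + Pi.single i 1 then (1 : ZMod 2) else 0) *
          (if y = x' + Pi.single j 1 then (1 : ZMod 2) else 0) := by
        rw [Finset.sum_comm]
        apply Finset.sum_congr rfl
        intro i _
        rw [Finset.sum_comm]
    _ = ∑ i, ∑ j, (if x + Pi.single i 1 = x' + Pi.single j 1 then (1 : ZMod 2) else 0) := by
        apply Finset.sum_congr rfl; intro i _
        apply Finset.sum_congr rfl; intro j _
        exact inner _ _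
    _ = if x = x' then (n : ZMod 2) else 0 := by
        by_cases hxx : x = x'
        · subst hxx
          rw [if_pos rfl]
          have hcond : ∀ i j : Fin n,
              (x + Pi.single i 1 = x + Pi.single j 1) ↔ j = i := by
            intro i j
            constructor
            · intro hh; exact (single_index_inj (add_left_cancel hh)).symm
            · rintro rfl; rfl
          simp [hcond, Finset.sum_ite_eq]
        · rw [if_neg hxx, ← Finset.sum_product', Finset.univ_product_univ]
          have hswap : ∀ i j : Fin n,
              (x + Pi.single i 1 = x' + Pi.single j 1) →
              (x + Pi.single j 1 = x' + Pi.single i 1) := by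
            intro i j h
            funext k
            exact zmod2_rearr _ _ _ _ (congrFun h k)
          apply Finset.sum_ninvolution (fun p => (p.2, p.1))
          · intro p
            by_cases h : x + Pi.single p.1 1 = x' + Pi.single p.2 1
            · rw [if_pos h, if_pos (hswap _ _ h)]
              decide
            · rw [if_neg h, if_neg (fun h' => h (hswap _ _ h'))]
              simp
          · intro p hf hgp
            apply hf
            have h12 : p.2 = p.1 := congrArg Prod.fst hgp
            rw [if_neg]
            intro hc
            apply hxx
            rw [h12] at hc
            exact add_right_cancel hc
          · intro p; exact Finset.mem_univ _
          · intro p; rfl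

lemma zmod2_ne_zero : ∀ a : ZMod 2, a ≠ 0 → a = 1 := by decide

lemma entry_sum_even {n : ℕ} (x x' : evenV n) :
    ∑ y : oddV n,
        (if (hypercube n).Adj x.val y.val then (1 : ZMod 2) else 0) *
        (if (hypercube n).Adj x'.val y.val then (1 : ZMod 2) else 0)
      = if x = x' then (n : ZMod 2) else 0 := by
  obtain ⟨x, hx⟩ := x
  obtain ⟨x', hx'⟩ := x'
  have h1 : (∑ y : oddV n,
        (if (hypercube n).Adj x y.val then (1 : ZMod 2) else 0) *
        (if (hypercube n).Adj x' y.val then (1 : ZMod 2) else 0))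
      = ∑ y : Fin n → ZMod 2,
        (if (hypercube n).Adj x y then (1 : ZMod 2) else 0) *
        (if (hypercube n).Adj x' y then (1 : ZMod 2) else 0) := by
    have h2 : (∑ y : oddV n,
        (if (hypercube n).Adj x y.val then (1 : ZMod 2) else 0) *
        (if (hypercube n).Adj x' y.val then (1 : ZMod 2) else 0))
      = ∑ y ∈ Finset.univ.filter (fun y : Fin n → ZMod 2 => ∑ i, y i ≠ 0),
        (if (hypercube n).Adj x y then (1 : ZMod 2) else 0) *
        (if (hypercube n).Adj x' y then (1 : ZMod 2) else 0) := by
      show (∑ y : {v : Fin n → ZMod 2 // ∑ i, v i ≠ 0},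
        (if (hypercube n).Adj x y.val then (1 : ZMod 2) else 0) *
        (if (hypercube n).Adj x' y.val then (1 : ZMod 2) else 0)) = _
      refine (Finset.sum_subtype
        (Finset.univ.filter (fun y : Fin n → ZMod 2 => ∑ i, y i ≠ 0)) ?_
        (fun y => (if (hypercube n).Adj x y then (1 : ZMod 2) else 0) *
          (if (hypercube n).Adj x' y then (1 : ZMod 2) else 0))).symm
      intro y; simp
    rw [h2, Finset.sum_filter]
    apply Finset.sum_congr rfl
    intro y _
    by_cases hp : ∑ i, y i ≠ 0
    · rw [if_pos hp]
    · rw [if_neg hp]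
      push_neg at hp
      symm
      rw [if_neg, zero_mul]
      intro h
      have hs := adj_sum h
      rw [hx, hp] at hs
      simpa using hs
  rw [h1, key_sum]
  by_cases hxx : x = x'
  · subst hxx
    simp
    exact fun h => absurd rfl h
  · rw [if_neg hxx]
    exact (if_neg (fun h : (⟨x, hx⟩ : evenV n) = ⟨x', hx'⟩ => hxx (congrArg (fun v : evenV n => v.val) h))).symm

lemma entry_sum_odd {n : ℕ} (x x' : oddV n) :
    ∑ y : evenV n,
        (if (hypercube n).Adj y.val x.val then (1 : ZMod 2) else 0) *
        (if (hypercube n).Adj y.val x'.val then (1 : ZMod 2) else 0)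
      = if x = x' then (n : ZMod 2) else 0 := by
  obtain ⟨x, hx⟩ := x
  obtain ⟨x', hx'⟩ := x'
  have hsymm : ∀ a b : Fin n → ZMod 2,
      (if (hypercube n).Adj a b then (1 : ZMod 2) else 0)
        = if (hypercube n).Adj b a then (1 : ZMod 2) else 0 :=
    fun a b => if_congr ((hypercube n).adj_comm a b) rfl rfl
  have h1 : (∑ y : evenV n,
        (if (hypercube n).Adj y.val x then (1 : ZMod 2) else 0) *
        (if (hypercube n).Adj y.val x' then (1 : ZMod 2) else 0))
      = ∑ y : Fin n → ZMod 2,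
        (if (hypercube n).Adj x y then (1 : ZMod 2) else 0) *
        (if (hypercube n).Adj x' y then (1 : ZMod 2) else 0) := by
    have h2 : (∑ y : evenV n,
        (if (hypercube n).Adj y.val x then (1 : ZMod 2) else 0) *
        (if (hypercube n).Adj y.val x' then (1 : ZMod 2) else 0))
      = ∑ y ∈ Finset.univ.filter (fun y : Fin n → ZMod 2 => ∑ i, y i = 0),
        (if (hypercube n).Adj y x then (1 : ZMod 2) else 0) *
        (if (hypercube n).Adj y x' then (1 : ZMod 2) else 0) := by
      show (∑ y : {v : Fin n → ZMod 2 // ∑ i, v i = 0},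
        (if (hypercube n).Adj y.val x then (1 : ZMod 2) else 0) *
        (if (hypercube n).Adj y.val x' then (1 : ZMod 2) else 0)) = _
      refine (Finset.sum_subtype
        (Finset.univ.filter (fun y : Fin n → ZMod 2 => ∑ i, y i = 0)) ?_
        (fun y => (if (hypercube n).Adj y x then (1 : ZMod 2) else 0) *
          (if (hypercube n).Adj y x' then (1 : ZMod 2) else 0))).symm
      intro y; simp
    rw [h2, Finset.sum_filter]
    apply Finset.sum_congr rfl
    intro y _
    rw [hsymm y x, hsymm y x']
    by_cases hp : ∑ i, y i = 0
    · rw [if_pos hp]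
    · rw [if_neg hp]
      symm
      rw [if_neg, zero_mul]
      intro h
      have hs := adj_sum h
      rw [zmod2_ne_zero _ hx] at hs
      simp only [zmod2_add_self] at hs
      exact hp hs
  rw [h1, key_sum]
  by_cases hxx : x = x'
  · subst hxx
    simp
    exact fun h => absurd rfl h
  · rw [if_neg hxx]
    exact (if_neg (fun h : (⟨x, hx⟩ : oddV n) = ⟨x', hx'⟩ => hxx (congrArg (fun v : oddV n => v.val) h))).symm

open Matrix in
/-- For every odd `n ≥ 1`, the bipartite adjacency matrix `A` of `Q_n` over `ZMod 2`
is nonsingular with inverse its own transpose: `A * Aᵀ = 1` and `Aᵀ * A = 1`.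
In particular, identifying the row and column index sets by any bijection making `A`
square (e.g. the natural symmetric lexicographic indexing, under which `A` is a
symmetric matrix), `A` is invertible and is its own inverse. -/
theorem bipAdjMatrix_self_inverse_odd (n : ℕ) (hn : 1 ≤ n) (hodd : Odd n) :
    (bipAdjMatrix n) * (bipAdjMatrix n)ᵀ = 1 ∧
    (bipAdjMatrix n)ᵀ * (bipAdjMatrix n) = 1 := by
  have hcast : (n : ZMod 2) = 1 := by
    obtain ⟨k, rfl⟩ := hodd
    push_cast
    rw [show ((2 : ZMod 2)) = 0 by decide]
    ring
  constructor
  · ext x x'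
    rw [Matrix.mul_apply]
    simp only [Matrix.transpose_apply, bipAdjMatrix]
    rw [entry_sum_even x x', hcast, Matrix.one_apply]
  · ext x x'
    rw [Matrix.mul_apply]
    simp only [Matrix.transpose_apply, bipAdjMatrix]
    rw [entry_sum_odd x x', hcast, Matrix.one_apply]
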